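/- Let d ≥ 1, δ > 0, let μ be a finite nonnegative Borel measure on [0,δ], let K ≥ 0 and let b : ℝ^d × ℝ^d → ℝ^d satisfy ‖b(x,y) − b(x̃,ỹ)‖ ≤ K(‖x−x̃‖ + ‖y−ỹ‖) for all x, x̃, y, ỹ ∈ ℝ^d. Let φ : [−δ,0] → ℝ^d be continuous and let x, x̃ : [−δ,1] → ℝ^d be two continuous functions with x(t) = x̃(t) = φ(t) for t ∈ [−δ,0] and x(t) = φ(0) + ∫₀^t b(x(s), ∫₀^δ x(s−u) μ(du)) ds, x̃(t) = φ(0) + ∫₀^t b(x̃(s), ∫₀^δ x̃(s−u) μ(du)) ds for all t ∈ [0,1]. Then x(t) = x̃(t) for all t ∈ [−δ,1]. -/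

import Mathlib

open MeasureTheory Set Filter

/-- Uniqueness of solutions of the delay ordinary differential equation
`x(t) = φ(0) + ∫₀ᵗ b(x(s), ∫₀^δ x(s-u) μ(du)) ds` with initial path `φ` on `[-δ,0]`,
for a Lipschitz drift `b` and a finite delay measure `μ` on `[0,δ]`. -/
theorem delay_ode_unique
    (d : ℕ) (hd : 1 ≤ d) (δ : ℝ) (hδ : 0 < δ)
    (μ : Measure ℝ) [IsFiniteMeasure μ]
    (K : ℝ) (hK : 0 ≤ K)
    (b : EuclideanSpace ℝ (Fin d) → EuclideanSpace ℝ (Fin d) → EuclideanSpace ℝ (Fin d))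
    (hb : ∀ x x' y y' : EuclideanSpace ℝ (Fin d),
      ‖b x y - b x' y'‖ ≤ K * (‖x - x'‖ + ‖y - y'‖))
    (φ : ℝ → EuclideanSpace ℝ (Fin d)) (hφ : ContinuousOn φ (Icc (-δ) 0))
    (x x' : ℝ → EuclideanSpace ℝ (Fin d))
    (hxc : ContinuousOn x (Icc (-δ) 1)) (hx'c : ContinuousOn x' (Icc (-δ) 1))
    (hxinit : ∀ t ∈ Icc (-δ) (0:ℝ), x t = φ t)
    (hx'init : ∀ t ∈ Icc (-δ) (0:ℝ), x' t = φ t)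
    (hxeq : ∀ t ∈ Icc (0:ℝ) 1,
      x t = φ 0 + ∫ s in (0:ℝ)..t, b (x s) (∫ u in Icc (0:ℝ) δ, x (s - u) ∂μ))
    (hx'eq : ∀ t ∈ Icc (0:ℝ) 1,
      x' t = φ 0 + ∫ s in (0:ℝ)..t, b (x' s) (∫ u in Icc (0:ℝ) δ, x' (s - u) ∂μ)) :
    ∀ t ∈ Icc (-δ) (1:ℝ), x t = x' t := by
  -- clamping projection onto [-δ, 1]
  set p : ℝ → ℝ := fun t => max (-δ) (min 1 t) with hp
  have hpc : Continuous p := continuous_const.max (continuous_const.min continuous_id)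
  have hpmem : ∀ t, p t ∈ Icc (-δ) 1 :=
    fun t => ⟨le_max_left _ _, max_le (by linarith) (min_le_left _ _)⟩
  have hpid : ∀ t ∈ Icc (-δ) 1, p t = t := by
    intro t ht
    show max (-δ) (min 1 t) = t
    rw [min_eq_right ht.2, max_eq_right ht.1]
  -- continuous global versions of x, x'
  set y : ℝ → EuclideanSpace ℝ (Fin d) := fun t => x (p t) with hy
  set y' : ℝ → EuclideanSpace ℝ (Fin d) := fun t => x' (p t) with hy'
  have hyc : Continuous y := hxc.comp_continuous hpc hpmem
  have hy'c : Continuous y' := hx'c.comp_continuous hpc hpmem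
  have hyx : ∀ t ∈ Icc (-δ) 1, y t = x t := fun t ht => congrArg x (hpid t ht)
  have hy'x : ∀ t ∈ Icc (-δ) 1, y' t = x' t := fun t ht => congrArg x' (hpid t ht)
  -- y and y' agree on nonpositive times
  have hy0 : ∀ t : ℝ, t ≤ 0 → y t = y' t := by
    intro t ht
    have hpt : p t ∈ Icc (-δ) 0 := by
      constructor
      · exact le_max_left _ _
      · exact max_le (by linarith) (le_trans (min_le_right _ _) ht)
    show x (p t) = x' (p t)
    rw [hxinit _ hpt, hx'init _ hpt]
  -- bounds
  obtain ⟨Mx, hMx⟩ := isCompact_Icc.exists_bound_of_continuousOn hxc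
  obtain ⟨Mx', hMx'⟩ := isCompact_Icc.exists_bound_of_continuousOn hx'c
  set B0 : ℝ := Mx + Mx' with hB0def
  have hg_le : ∀ t, ‖y t - y' t‖ ≤ B0 :=
    fun t => (norm_sub_le _ _).trans (add_le_add (hMx _ (hpmem t)) (hMx' _ (hpmem t)))
  have hB0 : 0 ≤ B0 := le_trans (norm_nonneg _) (hg_le 0)
  set μT : ℝ := (μ (Icc 0 δ)).toReal with hμTdef
  have hμT : 0 ≤ μT := ENNReal.toReal_nonneg
  set C : ℝ := K * (1 + μT) with hCdef
  have hC : 0 ≤ C := mul_nonneg hK (by linarith)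
  -- delayed terms
  set H : ℝ → EuclideanSpace ℝ (Fin d) := fun s => ∫ u in Icc (0:ℝ) δ, y (s - u) ∂μ with hH
  set H' : ℝ → EuclideanSpace ℝ (Fin d) := fun s => ∫ u in Icc (0:ℝ) δ, y' (s - u) ∂μ with hH'
  have hIy : ∀ s : ℝ, IntegrableOn (fun u => y (s - u)) (Icc 0 δ) μ := fun s =>
    ContinuousOn.integrableOn_compact isCompact_Icc
      ((hyc.comp (continuous_const.sub continuous_id)).continuousOn)
  have hIy' : ∀ s : ℝ, IntegrableOn (fun u => y' (s - u)) (Icc 0 δ) μ := fun s =>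
    ContinuousOn.integrableOn_compact isCompact_Icc
      ((hy'c.comp (continuous_const.sub continuous_id)).continuousOn)
  have hHc : Continuous H := by
    apply continuous_of_dominated (bound := fun _ => Mx)
    · intro s
      exact ((hyc.comp (continuous_const.sub continuous_id)).aestronglyMeasurable)
    · intro s
      filter_upwards with u
      exact hMx _ (hpmem _)
    · exact integrable_const _
    · filter_upwards with u
      exact hyc.comp (continuous_id.sub continuous_const)
  have hH'c : Continuous H' := by
    apply continuous_of_dominated (bound := fun _ => Mx')
    · intro s
      exact ((hy'c.comp (continuous_const.sub continuous_id)).aestronglyMeasurable)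
    · intro s
      filter_upwards with u
      exact hMx' _ (hpmem _)
    · exact integrable_const _
    · filter_upwards with u
      exact hy'c.comp (continuous_id.sub continuous_const)
  -- continuity of b
  have hbl : LipschitzWith (Real.toNNReal (2 * K))
      (fun q : EuclideanSpace ℝ (Fin d) × EuclideanSpace ℝ (Fin d) => b q.1 q.2) := by
    apply LipschitzWith.of_dist_le_mul
    intro q r
    rw [Real.coe_toNNReal _ (by linarith), dist_eq_norm]
    calc ‖b q.1 q.2 - b r.1 r.2‖ ≤ K * (‖q.1 - r.1‖ + ‖q.2 - r.2‖) := hb _ _ _ _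
      _ ≤ K * (dist q r + dist q r) := by
          apply mul_le_mul_of_nonneg_left _ hK
          rw [← dist_eq_norm, ← dist_eq_norm, Prod.dist_eq]
          exact add_le_add (le_max_left _ _) (le_max_right _ _)
      _ = 2 * K * dist q r := by ring
  have hbc : Continuous (fun q : EuclideanSpace ℝ (Fin d) × EuclideanSpace ℝ (Fin d) => b q.1 q.2) :=
    hbl.continuous
  have hG1 : Continuous (fun s : ℝ => b (y s) (H s)) := hbc.comp (hyc.prodMk hHc)
  have hG2 : Continuous (fun s : ℝ => b (y' s) (H' s)) := hbc.comp (hy'c.prodMk hH'c)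
  -- the difference integrand
  set F : ℝ → EuclideanSpace ℝ (Fin d) := fun s => b (y s) (H s) - b (y' s) (H' s) with hF
  have hFc : Continuous F := hG1.sub hG2
  -- the key integral identity
  have key : ∀ t ∈ Icc (0:ℝ) 1, y t - y' t = ∫ s in (0:ℝ)..t, F s := by
    intro t ht
    have htI : t ∈ Icc (-δ) 1 := ⟨by linarith [ht.1], ht.2⟩
    have huIcc : uIcc (0:ℝ) t = Icc 0 t := uIcc_of_le ht.1
    have hsub : Icc (0:ℝ) t ⊆ Icc (-δ) 1 := fun s hs => ⟨by linarith [hs.1], le_trans hs.2 ht.2⟩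
    have hcongr1 : (∫ s in (0:ℝ)..t, b (x s) (∫ u in Icc (0:ℝ) δ, x (s - u) ∂μ))
        = ∫ s in (0:ℝ)..t, b (y s) (H s) := by
      apply intervalIntegral.integral_congr
      intro s hs
      rw [huIcc] at hs
      have hsm : s ∈ Icc (-δ) 1 := hsub hs
      have h1 : x s = y s := (hyx s hsm).symm
      have h2 : (∫ u in Icc (0:ℝ) δ, x (s - u) ∂μ) = H s := by
        rw [hH]
        apply setIntegral_congr_fun measurableSet_Icc
        intro u hu
        exact (hyx (s - u) ⟨by linarith [hs.1, hu.2], by linarith [hs.2, ht.2, hu.1]⟩).symm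
      show b (x s) (∫ u in Icc (0:ℝ) δ, x (s - u) ∂μ) = b (y s) (H s)
      rw [h1, h2]
    have hcongr2 : (∫ s in (0:ℝ)..t, b (x' s) (∫ u in Icc (0:ℝ) δ, x' (s - u) ∂μ))
        = ∫ s in (0:ℝ)..t, b (y' s) (H' s) := by
      apply intervalIntegral.integral_congr
      intro s hs
      rw [huIcc] at hs
      have hsm : s ∈ Icc (-δ) 1 := hsub hs
      have h1 : x' s = y' s := (hy'x s hsm).symm
      have h2 : (∫ u in Icc (0:ℝ) δ, x' (s - u) ∂μ) = H' s := by
        rw [hH']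
        apply setIntegral_congr_fun measurableSet_Icc
        intro u hu
        exact (hy'x (s - u) ⟨by linarith [hs.1, hu.2], by linarith [hs.2, ht.2, hu.1]⟩).symm
      show b (x' s) (∫ u in Icc (0:ℝ) δ, x' (s - u) ∂μ) = b (y' s) (H' s)
      rw [h1, h2]
    have e1 := hxeq t ht
    have e2 := hx'eq t ht
    rw [hcongr1] at e1
    rw [hcongr2] at e2
    rw [hyx t htI, hy'x t htI, e1, e2]
    rw [add_sub_add_left_eq_sub]
    rw [← intervalIntegral.integral_sub (hG1.intervalIntegrable _ _) (hG2.intervalIntegrable _ _)]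
  -- main induction
  have main : ∀ n : ℕ, ∀ t ∈ Icc (0:ℝ) 1,
      ‖y t - y' t‖ ≤ B0 * C ^ n * t ^ n / n.factorial := by
    intro n
    induction n with
    | zero =>
      intro t ht
      have h0 : B0 * C ^ 0 * t ^ 0 / (Nat.factorial 0 : ℝ) = B0 := by norm_num
      rw [h0]
      exact hg_le t
    | succ n ih =>
      intro t ht
      have hbnd : ∀ s ∈ Icc (0:ℝ) 1, ‖F s‖ ≤ B0 * C ^ (n + 1) * s ^ n / n.factorial := by
        intro s hs
        have hfact : (0:ℝ) < n.factorial := by positivity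
        have hdel : ∀ u ∈ Icc (0:ℝ) δ,
            ‖y (s - u) - y' (s - u)‖ ≤ B0 * C ^ n * s ^ n / n.factorial := by
          intro u hu
          rcases le_or_gt (s - u) 0 with h | h
          · rw [hy0 _ h, sub_self, norm_zero]
            have := hs.1
            positivity
          · have hmem : s - u ∈ Icc (0:ℝ) 1 := ⟨le_of_lt h, by linarith [hs.2, hu.1]⟩
            calc ‖y (s - u) - y' (s - u)‖ ≤ B0 * C ^ n * (s - u) ^ n / n.factorial := ih _ hmem
              _ ≤ B0 * C ^ n * s ^ n / n.factorial := by
                  apply div_le_div_of_nonneg_right _ hfact.le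
                  apply mul_le_mul_of_nonneg_left _ (by positivity)
                  exact pow_le_pow_left₀ (le_of_lt h) (by linarith [hu.1]) n
        have hHbnd : ‖H s - H' s‖ ≤ μT * (B0 * C ^ n * s ^ n / n.factorial) := by
          rw [hH, hH', ← integral_sub (hIy s) (hIy' s)]
          calc ‖∫ u in Icc (0:ℝ) δ, (y (s - u) - y' (s - u)) ∂μ‖
              ≤ ∫ u in Icc (0:ℝ) δ, (B0 * C ^ n * s ^ n / n.factorial) ∂μ := by
                apply norm_integral_le_of_norm_le (integrable_const _)
                filter_upwards [ae_restrict_mem measurableSet_Icc] with u hu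
                exact hdel u hu
            _ = μT * (B0 * C ^ n * s ^ n / n.factorial) := by
                rw [setIntegral_const, smul_eq_mul, hμTdef, Measure.real]
        calc ‖F s‖ ≤ K * (‖y s - y' s‖ + ‖H s - H' s‖) := hb _ _ _ _
          _ ≤ K * (B0 * C ^ n * s ^ n / n.factorial
                + μT * (B0 * C ^ n * s ^ n / n.factorial)) := by
              apply mul_le_mul_of_nonneg_left _ hK
              exact add_le_add (ih s hs) hHbnd
          _ = B0 * C ^ (n + 1) * s ^ n / n.factorial := by
              rw [hCdef]; ring
      have hIF : IntervalIntegrable F volume 0 t := hFc.intervalIntegrable _ _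
      have hIG : IntervalIntegrable (fun s => B0 * C ^ (n + 1) * s ^ n / n.factorial) volume 0 t :=
        ((continuous_const.mul (continuous_pow n)).div_const _).intervalIntegrable _ _
      rw [key t ht]
      calc ‖∫ s in (0:ℝ)..t, F s‖
          ≤ ∫ s in (0:ℝ)..t, ‖F s‖ := intervalIntegral.norm_integral_le_integral_norm ht.1
        _ ≤ ∫ s in (0:ℝ)..t, B0 * C ^ (n + 1) * s ^ n / n.factorial := by
            apply intervalIntegral.integral_mono_on ht.1 (hIF.norm) hIG
            intro s hs
            exact hbnd s ⟨hs.1, le_trans hs.2 ht.2⟩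
        _ = B0 * C ^ (n + 1) * t ^ (n + 1) / (n + 1).factorial := by
            have hfun : (fun s : ℝ => B0 * C ^ (n + 1) * s ^ n / n.factorial)
                = fun s : ℝ => (B0 * C ^ (n + 1) / n.factorial) * s ^ n := by
              funext s; ring
            have haux : ∀ a u v w : ℝ, a / u * (v / w) = a * v / (w * u) := by
              intro a u v w
              rw [div_mul_div_comm, mul_comm u w]
            rw [hfun, intervalIntegral.integral_const_mul, integral_pow,
              zero_pow (Nat.succ_ne_zero n), sub_zero,
              Nat.factorial_succ, Nat.cast_mul, Nat.cast_add, Nat.cast_one]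
            exact haux _ _ _ _
  -- conclusion
  intro t ht
  rcases le_or_gt t 0 with h | h
  · rw [hxinit t ⟨ht.1, h⟩, hx'init t ⟨ht.1, h⟩]
  · have htI : t ∈ Icc (0:ℝ) 1 := ⟨le_of_lt h, ht.2⟩
    have hbound : ∀ n : ℕ, ‖x t - x' t‖ ≤ B0 * ((C * t) ^ n / n.factorial) := by
      intro n
      have hmain := main n t htI
      rw [hyx t ht, hy'x t ht] at hmain
      calc ‖x t - x' t‖ ≤ B0 * C ^ n * t ^ n / n.factorial := hmain
        _ = B0 * ((C * t) ^ n / n.factorial) := by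
            have haux : ∀ a c u f : ℝ, a * c ^ n * u ^ n / f = a * ((c * u) ^ n / f) := by
              intro a c u f
              rw [mul_pow]; ring
            exact haux _ _ _ _
    have htend : Tendsto (fun n : ℕ => B0 * ((C * t) ^ n / n.factorial)) atTop (nhds 0) := by
      have h2 := (FloorSemiring.tendsto_pow_div_factorial_atTop (C * t)).const_mul B0
      rw [mul_zero] at h2
      exact h2
    have hle : ‖x t - x' t‖ ≤ 0 := ge_of_tendsto htend (Filter.Eventually.of_forall hbound)
    have hz : ‖x t - x' t‖ = 0 := le_antisymm hle (norm_nonneg _)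
    rwa [norm_sub_eq_zero_iff] at hz
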